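/- Let B(x₁,x₂) = x₁·x₂·(1 − x₁ − x₂) be the product of the barycentric coordinates of the unit triangle. Then the Poincaré operator gives (𝔭B)(x₁,x₂) = (−x₂, x₁) · x₁x₂·(1/4 − (x₁+x₂)/5), which is a pair of polynomials of total degree 4; moreover 𝔭B does not belong to [P₂]² (the space of pairs of polynomials of total degree at most 2). Consequently, the subspace of (ℝ[x₁,x₂])² spanned by [P₂]² together with 𝔭B is a direct sum [P₂]² ⊕ span{𝔭B} and has dimension 13. -/
import Mathlib


open MeasureTheory MvPolynomial

/-- The Poincaré operator: `(𝔭u)(x) = (∫₀¹ t·u(tx) dt) • x^⊥` with `x^⊥ = (-x₂, x₁)`. -/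
noncomputable def poincareOp (u : ℝ × ℝ → ℝ) (x : ℝ × ℝ) : ℝ × ℝ :=
  (∫ t in (0:ℝ)..1, t * u (t • x)) • (-x.2, x.1)

/-- Evaluation of a two-variable polynomial at a point of `ℝ²`. -/
noncomputable def evalP (p : MvPolynomial (Fin 2) ℝ) (x : ℝ × ℝ) : ℝ :=
  MvPolynomial.eval ![x.1, x.2] p

/-- The bubble function `B(x₁,x₂) = x₁x₂(1 − x₁ − x₂)`. -/
noncomputable def bubble (x : ℝ × ℝ) : ℝ := x.1 * x.2 * (1 - x.1 - x.2)

/-- The polynomial `x₁x₂(1/4 − (x₁+x₂)/5)`. -/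
noncomputable def bubbleFactor : MvPolynomial (Fin 2) ℝ :=
  X 0 * X 1 * (C (1/4 : ℝ) - (X 0 + X 1) * C (1/5 : ℝ))

/-- The pair of polynomials representing `𝔭B`, namely `(-x₂, x₁) · x₁x₂(1/4 − (x₁+x₂)/5)`. -/
noncomputable def pB : MvPolynomial (Fin 2) ℝ × MvPolynomial (Fin 2) ℝ :=
  (-(X 1) * bubbleFactor, X 0 * bubbleFactor)

/-- The space `[P₂]²` of pairs of polynomials of total degree at most 2. -/
noncomputable def P2sq : Submodule ℝ (MvPolynomial (Fin 2) ℝ × MvPolynomial (Fin 2) ℝ) :=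
  (restrictTotalDegree (Fin 2) ℝ 2).prod (restrictTotalDegree (Fin 2) ℝ 2)

-- auxiliary

lemma integral_key (x : ℝ × ℝ) :
    (∫ t in (0:ℝ)..1, t * bubble (t • x)) = x.1 * x.2 * (1/4 - (x.1 + x.2)/5) := by
  have h : (fun t : ℝ => t * bubble (t • x))
      = fun t : ℝ => (x.1*x.2) * t^3 - (x.1*x.2*(x.1+x.2)) * t^4 := by
    funext t; simp [bubble, Prod.smul_def, smul_eq_mul]; ring
  rw [h, intervalIntegral.integral_sub, intervalIntegral.integral_const_mul,
    intervalIntegral.integral_const_mul, integral_pow, integral_pow]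
  · ring
  · exact (intervalIntegral.intervalIntegrable_pow 3).const_mul _
  · exact (intervalIntegral.intervalIntegrable_pow 4).const_mul _

lemma cXX (a b : ℕ) (c : ℝ) :
    C c * X (0 : Fin 2) ^ a * X 1 ^ b
      = monomial (Finsupp.single 0 a + Finsupp.single 1 b) c := by
  rw [X_pow_eq_monomial, X_pow_eq_monomial, mul_assoc, monomial_mul, one_mul, C_mul_monomial,
    mul_one]

lemma pB1_eq : pB.1 =
    monomial (Finsupp.single 0 1 + Finsupp.single 1 2) (-(1/4 : ℝ))
    + monomial (Finsupp.single 0 2 + Finsupp.single 1 2) (1/5 : ℝ)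
    + monomial (Finsupp.single 0 1 + Finsupp.single 1 3) (1/5 : ℝ) := by
  rw [← cXX, ← cXX, ← cXX]
  simp only [pB, bubbleFactor, map_neg]
  ring

lemma pB2_eq : pB.2 =
    monomial (Finsupp.single 0 2 + Finsupp.single 1 1) (1/4 : ℝ)
    + monomial (Finsupp.single 0 3 + Finsupp.single 1 1) (-(1/5) : ℝ)
    + monomial (Finsupp.single 0 2 + Finsupp.single 1 2) (-(1/5) : ℝ) := by
  rw [← cXX, ← cXX, ← cXX]
  simp only [pB, bubbleFactor, map_neg]
  ring

lemma sum_single2 (a b : ℕ) :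
    ((Finsupp.single (0 : Fin 2) a + Finsupp.single 1 b).sum fun _ e => e) = a + b := by
  rw [Finsupp.sum_add_index (by simp) (by simp)]
  simp

lemma single2_ne (a b a' b' : ℕ) (h : a ≠ a' ∨ b ≠ b') :
    (Finsupp.single (0 : Fin 2) a + Finsupp.single 1 b)
      ≠ Finsupp.single 0 a' + Finsupp.single 1 b' := by
  intro he
  rcases h with h | h
  · exact h (by simpa using DFunLike.congr_fun he 0)
  · exact h (by simpa using DFunLike.congr_fun he 1)

lemma pB1_deg : pB.1.totalDegree = 4 := by
  apply le_antisymm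
  · rw [pB1_eq]
    refine (totalDegree_add _ _).trans (max_le ((totalDegree_add _ _).trans (max_le ?_ ?_)) ?_) <;>
      refine (totalDegree_monomial_le _ _).trans (le_of_eq_of_le (sum_single2 _ _) (by norm_num))
  · refine le_of_eq_of_le (sum_single2 2 2).symm (le_totalDegree (s := Finsupp.single 0 2 + Finsupp.single 1 2) ?_)
    · rw [mem_support_iff, pB1_eq]
      rw [coeff_add, coeff_add, coeff_monomial, coeff_monomial, coeff_monomial,
        if_neg (single2_ne 1 2 2 2 (Or.inl (by norm_num))), if_pos rfl,
        if_neg (single2_ne 1 3 2 2 (Or.inl (by norm_num)))]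
      norm_num

lemma pB2_deg : pB.2.totalDegree = 4 := by
  apply le_antisymm
  · rw [pB2_eq]
    refine (totalDegree_add _ _).trans (max_le ((totalDegree_add _ _).trans (max_le ?_ ?_)) ?_) <;>
      refine (totalDegree_monomial_le _ _).trans (le_of_eq_of_le (sum_single2 _ _) (by norm_num))
  · refine le_of_eq_of_le (sum_single2 3 1).symm (le_totalDegree (s := Finsupp.single 0 3 + Finsupp.single 1 1) ?_)
    · rw [mem_support_iff, pB2_eq]
      rw [coeff_add, coeff_add, coeff_monomial, coeff_monomial, coeff_monomial,
        if_neg (single2_ne 2 1 3 1 (Or.inl (by norm_num))), if_pos rfl,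
        if_neg (single2_ne 2 2 3 1 (Or.inl (by norm_num)))]
      norm_num

lemma pB_notMem : pB ∉ P2sq := by
  intro h
  have h1 : pB.1.totalDegree ≤ 2 := (mem_restrictTotalDegree _ _ _).mp h.1
  rw [pB1_deg] at h1
  omega

/-- equiv between a product submodule and the product of submodules -/
def submoduleProdEquiv {R M N : Type*} [Semiring R] [AddCommMonoid M] [AddCommMonoid N]
    [Module R M] [Module R N] (p : Submodule R M) (q : Submodule R N) :
    ↥(p.prod q) ≃ₗ[R] ↥p × ↥q where
  toFun x := (⟨x.1.1, x.2.1⟩, ⟨x.1.2, x.2.2⟩)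
  invFun y := ⟨(y.1.1, y.2.1), ⟨y.1.2, y.2.2⟩⟩
  left_inv _ := rfl
  right_inv _ := rfl
  map_add' _ _ := rfl
  map_smul' _ _ := rfl

lemma card_aux : Nat.card {n : Fin 2 →₀ ℕ | (n.sum fun _ e => e) ≤ 2} = 6 := by
  have key : ∀ n : Fin 2 →₀ ℕ, (n.sum fun _ e => e) = n 0 + n 1 := by
    intro n
    rw [Finsupp.sum_fintype _ _ (fun _ => rfl), Fin.sum_univ_two]
  have e : {n : Fin 2 →₀ ℕ | (n.sum fun _ e => e) ≤ 2} ≃ {p : ℕ × ℕ // p.1 + p.2 ≤ 2} :=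
    { toFun := fun n => ⟨(n.1 0, n.1 1), by have := n.2; rwa [Set.mem_setOf_eq, key] at this⟩
      invFun := fun p => ⟨Finsupp.single 0 p.1.1 + Finsupp.single 1 p.1.2, by
        rw [Set.mem_setOf_eq, sum_single2]; exact p.2⟩
      left_inv := fun n => by
        ext i
        fin_cases i <;> simp
      right_inv := fun p => by
        ext <;> simp }
  rw [Nat.card_congr e]
  have hs : {p : ℕ × ℕ | p.1 + p.2 ≤ 2}
      = ↑({(0,0),(0,1),(0,2),(1,0),(1,1),(2,0)} : Finset (ℕ × ℕ)) := by
    ext ⟨a, b⟩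
    simp only [Set.mem_setOf_eq, Finset.coe_insert, Set.mem_insert_iff, Finset.coe_singleton,
      Set.mem_singleton_iff, Prod.mk.injEq]
    omega
  have : {p : ℕ × ℕ // p.1 + p.2 ≤ 2} = ↥{p : ℕ × ℕ | p.1 + p.2 ≤ 2} := rfl
  rw [this, hs, Nat.card_coe_set_eq, Set.ncard_coe_finset]
  decide

lemma finrank_rtd : Module.finrank ℝ (restrictTotalDegree (Fin 2) ℝ 2) = 6 := by
  have : Module.finrank ℝ (restrictSupport ℝ {n : Fin 2 →₀ ℕ | (n.sum fun _ e => e) ≤ 2}) = 6 := by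
    rw [Module.finrank_eq_nat_card_basis
      (basisRestrictSupport ℝ {n : Fin 2 →₀ ℕ | (n.sum fun _ e => e) ≤ 2})]
    exact card_aux
  exact this

set_option synthInstance.maxHeartbeats 1000000 in

lemma finrank_P2sq : Module.finrank ℝ P2sq = 12 := by
  rw [P2sq, (submoduleProdEquiv _ _).finrank_eq, Module.finrank_prod, finrank_rtd]

instance : Module.Finite ℝ P2sq :=
  Module.Finite.equiv (submoduleProdEquiv _ _).symm

theorem poincareOp_bubble :
    (∀ x : ℝ × ℝ, poincareOp bubble x = (evalP pB.1 x, evalP pB.2 x)) ∧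
    (∀ x : ℝ × ℝ,
        poincareOp bubble x = (x.1 * x.2 * (1/4 - (x.1 + x.2)/5)) • (-x.2, x.1)) ∧
    pB.1.totalDegree = 4 ∧ pB.2.totalDegree = 4 ∧
    pB ∉ P2sq ∧
    Disjoint P2sq (Submodule.span ℝ {pB}) ∧
    Module.finrank ℝ ↥(P2sq ⊔ Submodule.span ℝ {pB}) = 13 := by
  have h2 : ∀ x : ℝ × ℝ,
      poincareOp bubble x = (x.1 * x.2 * (1/4 - (x.1 + x.2)/5)) • (-x.2, x.1) := by
    intro x
    rw [poincareOp, integral_key]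
  have h1 : ∀ x : ℝ × ℝ, poincareOp bubble x = (evalP pB.1 x, evalP pB.2 x) := by
    intro x
    rw [h2]
    simp only [evalP, pB, bubbleFactor, Prod.smul_def, smul_eq_mul]
    simp only [map_mul, map_sub, map_add, map_neg, eval_X, eval_C,
      Matrix.cons_val_zero, Matrix.cons_val_one, Matrix.head_cons]
    simp only [Prod.mk.injEq]
    constructor <;> ring
  have hne : pB ≠ 0 := by
    intro h
    have : pB.1.totalDegree = 4 := pB1_deg
    rw [h] at this
    simp [totalDegree_zero] at this
  have hdisj : Disjoint P2sq (Submodule.span ℝ {pB}) :=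
    (Submodule.disjoint_span_singleton' hne).mpr pB_notMem
  refine ⟨h1, h2, pB1_deg, pB2_deg, pB_notMem, hdisj, ?_⟩
  have := Submodule.finrank_sup_add_finrank_inf_eq P2sq (Submodule.span ℝ {pB})
  rw [disjoint_iff.mp hdisj, finrank_bot, finrank_P2sq, finrank_span_singleton hne] at this
  omega
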